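/- arXiv:math/0601653 — 4 statements merged into one kernel-verified Lean document; each statement's English description precedes it below -/
import Mathlib

section
/- Let ρ be a complex number with 0 < Re(ρ) < 1, let h ≥ 1/2 be real, and let s be a complex number with Re(s) > 1/2. Then |1 - (h+s)/ρ| > |1 - (h+1-conj(s))/ρ|. -/
open Complex in
theorem stmt_2 (ρ : ℂ) (hρ0 : 0 < ρ.re) (hρ1 : ρ.re < 1)
    (h : ℝ) (hh : 1/2 ≤ h) (s : ℂ) (hs : 1/2 < s.re) :
    ‖1 - ((h : ℂ) + s) / ρ‖ >
      ‖1 - ((h : ℂ) + 1 - (starRingEnd ℂ) s) / ρ‖ := by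
  have hρ : ρ ≠ 0 := fun h0 => by simp [h0] at hρ0
  have e1 : 1 - ((h : ℂ) + s) / ρ = (ρ - ((h : ℂ) + s)) / ρ := by field_simp
  have e2 : 1 - ((h : ℂ) + 1 - (starRingEnd ℂ) s) / ρ
      = (ρ - ((h : ℂ) + 1 - (starRingEnd ℂ) s)) / ρ := by field_simp
  rw [e1, e2, norm_div, norm_div, gt_iff_lt,
    div_lt_div_iff_of_pos_right (norm_pos_iff.mpr hρ)]
  apply lt_of_pow_lt_pow_left₀ 2 (norm_nonneg _)
  rw [Complex.sq_norm, Complex.sq_norm]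
  simp only [Complex.normSq_apply, Complex.sub_re, Complex.sub_im, Complex.add_re,
    Complex.add_im, Complex.ofReal_re, Complex.ofReal_im, Complex.one_re, Complex.one_im,
    Complex.conj_re, Complex.conj_im]
  nlinarith [sq_nonneg (ρ.im - s.im)]
end

section
/- Let E : ℂ → ℂ be an entire function satisfying |E(s)| > |E(1 - conj(s))| for all s with Re(s) > 1/2. Define A(s) = (E(s) + conj(E(1 - conj(s))))/2. Then A has no zeros off the critical line: if A(s) = 0 then Re(s) = 1/2. -/
theorem stmt_4 (E : ℂ → ℂ) (hE : Differentiable ℂ E)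
    (hineq : ∀ s : ℂ, 1/2 < s.re →
      ‖E s‖ > ‖E (1 - (starRingEnd ℂ) s)‖)
    (A : ℂ → ℂ)
    (hA : ∀ s, A s = (E s + (starRingEnd ℂ) (E (1 - (starRingEnd ℂ) s))) / 2) :
    ∀ s : ℂ, A s = 0 → s.re = 1/2 := by
  intro s hs
  rw [hA s, div_eq_zero_iff] at hs
  have hz : E s = -((starRingEnd ℂ) (E (1 - (starRingEnd ℂ) s))) := by
    rcases hs with h | h
    · exact eq_neg_of_add_eq_zero_left h
    · norm_num at h
  have habs : ‖E s‖ = ‖E (1 - (starRingEnd ℂ) s)‖ := by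
    rw [hz, norm_neg, Complex.norm_conj]
  by_contra hne
  rcases lt_or_gt_of_ne hne with hlt | hgt
  · have h1 : 1/2 < (1 - (starRingEnd ℂ) s).re := by
      simp [Complex.sub_re, Complex.conj_re]; linarith
    have := hineq _ h1
    rw [show 1 - (starRingEnd ℂ) (1 - (starRingEnd ℂ) s) = s by
      simp [map_sub]] at this
    linarith [habs, this]
  · have := hineq s hgt
    linarith [habs, this]
end

section
/- Let E : ℂ → ℂ be an entire function satisfying |E(s)| > |E(1 - conj(s))| for all s with Re(s) > 1/2. Define B(s) = -(E(s) - conj(E(1 - conj(s))))/(2i). Then every zero of B lies on the line Re(s) = 1/2. -/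
theorem stmt_5 (E : ℂ → ℂ) (hE : Differentiable ℂ E)
    (hineq : ∀ s : ℂ, 1/2 < s.re →
      ‖E s‖ > ‖E (1 - (starRingEnd ℂ) s)‖)
    (B : ℂ → ℂ)
    (hB : ∀ s, B s = -(E s - (starRingEnd ℂ) (E (1 - (starRingEnd ℂ) s))) / (2 * Complex.I)) :
    ∀ s : ℂ, B s = 0 → s.re = 1/2 := by
  intro s hs
  rw [hB s, div_eq_zero_iff] at hs
  have h2i : (2 * Complex.I) ≠ 0 := by simp [Complex.I_ne_zero]
  have hEq : E s = (starRingEnd ℂ) (E (1 - (starRingEnd ℂ) s)) := by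
    rcases hs with h | h
    · exact sub_eq_zero.mp (neg_eq_zero.mp h)
    · exact absurd h h2i
  have habs : ‖E s‖ = ‖E (1 - (starRingEnd ℂ) s)‖ := by
    rw [hEq, Complex.norm_conj]
  rcases lt_trichotomy s.re (1/2) with h | h | h
  · have ht : (1/2 : ℝ) < (1 - (starRingEnd ℂ) s).re := by
      simp [Complex.sub_re, Complex.conj_re]; linarith
    have := hineq _ ht
    have h2 : (1 - (starRingEnd ℂ) (1 - (starRingEnd ℂ) s)) = s := by
      simp [map_sub]
    rw [h2] at this
    linarith [habs]
  · exact h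
  · exact absurd habs (ne_of_gt (hineq s h))
end

section
/- Let E : ℂ → ℂ be an entire function satisfying |E(s)| > |E(1 - conj(s))| for all s with Re(s) > 1/2, and define A(s) = (E(s) + conj(E(1-conj(s))))/2 and B(s) = -(E(s) - conj(E(1-conj(s))))/(2i). Then for every real t, writing s = 1/2 + it, one has Im( A'(s) · conj(B(s)) - B'(s) · conj(A(s)) ) ≤ 0; equivalently, (i·A'(s))·B(s) - (i·B'(s))·A(s) is a nonnegative real number (using that A and B are real on the critical line). -/
open Complex Asymptotics Filter

-- derivative of the conjugate-reflected function
lemma conj_conj_hasDerivAt (E : ℂ → ℂ) (hE : Differentiable ℂ E) (z : ℂ) :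
    HasDerivAt (fun x => (starRingEnd ℂ) (E ((starRingEnd ℂ) x)))
      ((starRingEnd ℂ) (deriv E ((starRingEnd ℂ) z))) z := by
  have h := (hE ((starRingEnd ℂ) z)).hasDerivAt
  rw [hasDerivAt_iff_isLittleO] at h ⊢
  have hc : Filter.Tendsto (starRingEnd ℂ) (nhds z) (nhds ((starRingEnd ℂ) z)) :=
    Complex.continuous_conj.continuousAt
  have h2 := h.comp_tendsto hc
  simp only [Function.comp_def] at h2
  rw [← isLittleO_norm_norm] at h2 ⊢
  refine h2.congr (fun x => ?_) (fun x => ?_)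
  · rw [← RCLike.norm_conj]
    congr 1
    simp [map_sub, map_mul, smul_eq_mul]
  · rw [← map_sub, RCLike.norm_conj]


lemma key_nonneg (E : ℂ → ℂ) (hE : Differentiable ℂ E)
    (hineq : ∀ s : ℂ, 1/2 < s.re →
      ‖E s‖ > ‖E (1 - (starRingEnd ℂ) s)‖) (t : ℝ) :
    0 ≤ (deriv E (1/2 + t * Complex.I) * (starRingEnd ℂ) (E (1/2 + t * Complex.I))).re := by
  set u : ℝ → ℝ := fun σ => Complex.normSq (E (σ + t * Complex.I)) with hu
  have hu' : ∀ σ : ℝ, HasDerivAt u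
      (2 * (deriv E (σ + t*Complex.I) * (starRingEnd ℂ) (E (σ + t*Complex.I))).re) σ := by
    intro σ
    have hf : HasDerivAt (fun σ : ℝ => E (σ + t*Complex.I)) (deriv E (σ + t*Complex.I)) σ := by
      have h1 : HasDerivAt (fun z : ℂ => E (z + t*Complex.I)) (deriv E ((σ:ℂ) + t*Complex.I)) (σ:ℂ) := by
        have h2 := (hE ((σ:ℂ) + t*Complex.I)).hasDerivAt.comp (σ:ℂ)
          ((hasDerivAt_id (σ:ℂ)).add_const (t*Complex.I))
        simpa [Function.comp_def] using h2
      exact h1.comp_ofReal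
    have hre : HasDerivAt (fun σ : ℝ => (E (σ + t*Complex.I)).re)
        (deriv E (σ + t*Complex.I)).re σ := Complex.reCLM.hasFDerivAt.comp_hasDerivAt σ hf
    have him : HasDerivAt (fun σ : ℝ => (E (σ + t*Complex.I)).im)
        (deriv E (σ + t*Complex.I)).im σ := Complex.imCLM.hasFDerivAt.comp_hasDerivAt σ hf
    have h3 := (hre.mul hre).add (him.mul him)
    have h4 : u = fun σ : ℝ => (E (σ + t*Complex.I)).re * (E (σ + t*Complex.I)).re
        + (E (σ + t*Complex.I)).im * (E (σ + t*Complex.I)).im := by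
      funext σ; simp [hu, Complex.normSq_apply]
    rw [h4]
    refine h3.congr_deriv ?_
    simp [Complex.mul_re]
    ring
  -- g α = u(1/2+α) - u(1/2-α)
  set L : ℝ := 2 * (deriv E (1/2 + t*Complex.I) * (starRingEnd ℂ) (E (1/2 + t*Complex.I))).re with hL
  have hhalf : ((1/2 : ℝ) : ℂ) = 1/2 := by norm_num
  have hg : HasDerivAt (fun α : ℝ => u (1/2 + α) - u (1/2 - α)) (2 * L) 0 := by
    have h1 : HasDerivAt (fun α : ℝ => u (1/2 + α)) L 0 := by
      have := (hu' (1/2 + 0)).comp 0 ((hasDerivAt_id (0:ℝ)).const_add (1/2 : ℝ))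
      simpa [hhalf, hL, Function.comp_def] using this
    have h2 : HasDerivAt (fun α : ℝ => u (1/2 - α)) (-L) 0 := by
      have := (hu' (1/2 - 0)).comp 0 ((hasDerivAt_id (0:ℝ)).const_sub (1/2 : ℝ))
      simpa [hhalf, hL, Function.comp_def] using this
    have := h1.sub h2
    exact this.congr_deriv (by ring)
  have hpos : ∀ α : ℝ, 0 < α → 0 ≤ u (1/2 + α) - u (1/2 - α) := by
    intro α hα
    have hs : (1/2 : ℝ) < (((1/2 + α : ℝ) : ℂ) + t*Complex.I).re := by
      simp; linarith
    have h5 := hineq (((1/2 + α : ℝ) : ℂ) + t*Complex.I) hs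
    have h6 : 1 - (starRingEnd ℂ) (((1/2 + α : ℝ) : ℂ) + t*Complex.I)
        = ((1/2 - α : ℝ) : ℂ) + t*Complex.I := by
      simp [Complex.ext_iff]; ring
    rw [h6] at h5
    have h7 : u (1/2 + α) = ‖E (((1/2 + α : ℝ) : ℂ) + t*Complex.I)‖^2 := by
      simp [hu, Complex.sq_norm]
    have h8 : u (1/2 - α) = ‖E (((1/2 - α : ℝ) : ℂ) + t*Complex.I)‖^2 := by
      simp [hu, Complex.sq_norm]
    rw [h7, h8]
    have := pow_lt_pow_left₀ h5 (norm_nonneg _) (two_ne_zero)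
    linarith
  -- slope argument
  rw [hasDerivAt_iff_tendsto_slope] at hg
  have hmono : Tendsto (slope (fun α : ℝ => u (1/2 + α) - u (1/2 - α)) 0) (nhdsWithin 0 (Set.Ioi 0)) (nhds (2*L)) :=
    hg.mono_left (nhdsWithin_mono 0 (fun x hx => ne_of_gt hx))
  have h2L : 0 ≤ 2 * L := by
    refine ge_of_tendsto hmono ?_
    filter_upwards [eventually_mem_nhdsWithin] with x hx
    have hx0 : (0:ℝ) < x := hx
    rw [slope_def_field]
    simp only [sub_zero, add_zero, sub_self]
    have := hpos x hx0
    have : (0:ℝ) ≤ u (1/2 + x) - u (1/2 - x) := this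
    rw [div_eq_mul_inv]
    positivity
  rw [hL] at h2L; linarith

theorem stmt_6 (E : ℂ → ℂ) (hE : Differentiable ℂ E)
    (hineq : ∀ s : ℂ, 1/2 < s.re →
      ‖E s‖ > ‖E (1 - (starRingEnd ℂ) s)‖)
    (A B : ℂ → ℂ)
    (hA : ∀ s, A s = (E s + (starRingEnd ℂ) (E (1 - (starRingEnd ℂ) s))) / 2)
    (hB : ∀ s, B s = -(E s - (starRingEnd ℂ) (E (1 - (starRingEnd ℂ) s))) / (2 * Complex.I)) :
    ∀ t : ℝ,
      (deriv A (1/2 + t * Complex.I) * (starRingEnd ℂ) (B (1/2 + t * Complex.I))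
        - deriv B (1/2 + t * Complex.I) * (starRingEnd ℂ) (A (1/2 + t * Complex.I))).im ≤ 0 := by
  intro t
  set s₀ : ℂ := 1/2 + t * Complex.I with hs₀
  have hc1 : (starRingEnd ℂ) (1 - s₀) = s₀ := by
    simp [hs₀, Complex.ext_iff]; norm_num
  have hc2 : 1 - (starRingEnd ℂ) s₀ = s₀ := by
    simp [hs₀, Complex.ext_iff]; norm_num
  -- derivative of the reflected term
  have hG : ∀ z : ℂ, HasDerivAt (fun s => (starRingEnd ℂ) (E (1 - (starRingEnd ℂ) s)))
      ((starRingEnd ℂ) (deriv E ((starRingEnd ℂ) (1 - z))) * (-1)) z := by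
    intro z
    have h1 : HasDerivAt (fun s : ℂ => 1 - s) (-1) z := (hasDerivAt_id z).const_sub 1
    have h2 := (conj_conj_hasDerivAt E hE (1 - z)).comp z h1
    convert h2 using 2 with s
    · rfl
    · rfl
    · simp [Function.comp, map_sub]
  have hG0 : HasDerivAt (fun s => (starRingEnd ℂ) (E (1 - (starRingEnd ℂ) s)))
      (-(starRingEnd ℂ) (deriv E s₀)) s₀ := by
    have := hG s₀
    rw [hc1] at this
    simpa using this
  -- derivatives of A and B
  have hAfun : A = fun s => (E s + (starRingEnd ℂ) (E (1 - (starRingEnd ℂ) s))) / 2 := funext hA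
  have hBfun : B = fun s => -(E s - (starRingEnd ℂ) (E (1 - (starRingEnd ℂ) s))) / (2 * Complex.I) :=
    funext hB
  have hAd : HasDerivAt A ((deriv E s₀ + -(starRingEnd ℂ) (deriv E s₀)) / 2) s₀ := by
    rw [hAfun]; exact ((hE s₀).hasDerivAt.add hG0).div_const 2
  have hBd : HasDerivAt B (-(deriv E s₀ - -(starRingEnd ℂ) (deriv E s₀)) / (2 * Complex.I)) s₀ := by
    rw [hBfun]; exact ((hE s₀).hasDerivAt.sub hG0).neg.div_const (2 * Complex.I)
  rw [hAd.deriv, hBd.deriv, hA s₀, hB s₀, hc2]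
  set d := deriv E s₀
  set e := E s₀
  have key := key_nonneg E hE hineq t
  rw [← hs₀] at key
  have key' : 0 ≤ d.re * e.re + d.im * e.im := by
    simpa [Complex.mul_re] using key
  simp only [map_div₀, map_sub, map_add, map_neg, map_mul, Complex.conj_conj, Complex.conj_I,
    Complex.sub_im, Complex.add_im, Complex.neg_im, Complex.mul_im, Complex.mul_re,
    Complex.div_im, Complex.div_re, Complex.normSq_apply]
  simp
  ring_nf
  nlinarith [key']
end
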